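/- If a composite φ = χ ∘ ψ of cofibrations in combinatorial 2-Cob has both φ and ψ in the image of the functor Φ from oriented 1-Cob, then χ is also in the image of Φ: its genus function is zero and its structure maps satisfy the five local conditions of an oriented 1-cobordism with appropriate signs. -/

import Mathlib

open scoped Classical

/-- The relation generating the pushout of a span `A ← k → B` of (finite) sets. -/
def PRel {k A B : Type} (f : k → A) (g : k → B) : A ⊕ B → A ⊕ B → Prop :=
  fun x y => ∃ z, x = Sum.inl (f z) ∧ y = Sum.inr (g z)

/-- The pushout of the span `A ← k → B`. -/
def Pushout {k A B : Type} (f : k → A) (g : k → B) : Type :=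
  Quot (PRel f g)

/-- Canonical map `ι_A : A → A ⊔_k B`. -/
def pInl {k A B : Type} (f : k → A) (g : k → B) (a : A) : Pushout f g :=
  Quot.mk _ (Sum.inl a)

/-- Canonical map `ι_B : B → A ⊔_k B`. -/
def pInr {k A B : Type} (f : k → A) (g : k → B) (b : B) : Pushout f g :=
  Quot.mk _ (Sum.inr b)

instance {k A B : Type} (f : k → A) (g : k → B) [Finite A] [Finite B] :
    Finite (Pushout f g) :=
  Quot.finite _

noncomputable instance {k A B : Type} (f : k → A) (g : k → B) [Fintype A] [Fintype B] :
    Fintype (Pushout f g) :=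
  Fintype.ofFinite _

/-- The genus formula of Definition 3.4:
`g(x) = 1 + Σ_{ι_A(a)=x}(g₁(a)−1) + Σ_{ι_B(b)=x}(g₂(b)−1) + #{y ∈ k : y ↦ x}`. -/
noncomputable def compGenus {k A B : Type} [Fintype k] [Fintype A] [Fintype B]
    (f : k → A) (g : k → B) (g1 : A → ℤ) (g2 : B → ℤ) (x : Pushout f g) : ℤ :=
  1 + (∑ a ∈ Finset.univ.filter (fun a => pInl f g a = x), (g1 a - 1))
    + (∑ b ∈ Finset.univ.filter (fun b => pInr f g b = x), (g2 b - 1))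
    + ((Finset.univ.filter (fun y : k => pInl f g (f y) = x)).card : ℤ)

/-- A combinatorial 2-cobordism from the finite set `m` to the finite set `n`. -/
structure Cob (m n : Type) : Type 1 where
  C : Type
  [fin : Fintype C]
  lm : m → C
  ln : n → C
  g : C → ℕ

attribute [instance] Cob.fin

/-- Composition of combinatorial 2-cobordisms via pushout of component sets
and the genus formula of Definition 3.4. -/
noncomputable def Cob.comp {m k n : Type} [Fintype k] (ψ : Cob k n) (φ : Cob m k) :
    Cob m n where
  C := Pushout φ.ln ψ.lm
  lm := fun x => pInl φ.ln ψ.lm (φ.lm x)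
  ln := fun y => pInr φ.ln ψ.lm (ψ.ln y)
  g := fun x =>
    (compGenus φ.ln ψ.lm (fun a => (φ.g a : ℤ)) (fun b => (ψ.g b : ℤ)) x).toNat

/-- Equivalence of combinatorial 2-cobordisms: a bijection of component sets
intertwining the structure maps and the genus functions. -/
def Cob.Equiv {m n : Type} (φ φ' : Cob m n) : Prop :=
  ∃ χ : φ.C ≃ φ'.C,
    (∀ x, χ (φ.lm x) = φ'.lm x) ∧ (∀ y, χ (φ.ln y) = φ'.ln y) ∧
    (∀ c, φ'.g (χ c) = φ.g c)

/-- A cofibration: `l_n` is injective and `l_n` lifts through `l_m`. -/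
def Cob.IsCofib {m n : Type} (φ : Cob m n) : Prop :=
  Function.Injective φ.ln ∧ ∃ u : n → m, ∀ y, φ.lm (u y) = φ.ln y

/-- A fibration: `l_m` is injective, `l_n` is surjective, and `g ∘ l_m = 0`. -/
def Cob.IsFib {m n : Type} (φ : Cob m n) : Prop :=
  Function.Injective φ.lm ∧ Function.Surjective φ.ln ∧ ∀ x, φ.g (φ.lm x) = 0

/-- The five local conditions of Definition 5.2.1 defining an oriented 1-cobordism
between signed finite sets (signs recorded by Boolean functions, `true` = `+`). -/
def IsOriented {m n C : Type} (sm : m → Bool) (sn : n → Bool)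
    (lm : m → C) (ln : n → C) : Prop :=
  ∀ c : C,
    (∃ a b : m, sm a = true ∧ sm b = false ∧ a ≠ b ∧
      (∀ x, lm x = c ↔ (x = a ∨ x = b)) ∧ (∀ y, ln y ≠ c)) ∨
    (∃ a b : n, sn a = true ∧ sn b = false ∧ a ≠ b ∧
      (∀ y, ln y = c ↔ (y = a ∨ y = b)) ∧ (∀ x, lm x ≠ c)) ∨
    (∃ a : m, ∃ b : n, sm a = sn b ∧
      (∀ x, lm x = c ↔ x = a) ∧ (∀ y, ln y = c ↔ y = b)) ∨
    ((∀ x, lm x ≠ c) ∧ (∀ y, ln y ≠ c))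

/-- Auxiliary map used to analyze the pushout when `f` is injective. -/
noncomputable def pAux {k A B : Type} (f : k → A) (g : k → B) : A ⊕ B → Option B
  | Sum.inl a => if h : ∃ z, f z = a then some (g h.choose) else none
  | Sum.inr b => some b

/-- Lift of `pAux` to the pushout, assuming `f` injective. -/
noncomputable def pAuxQ {k A B : Type} {f : k → A} (g : k → B)
    (hf : Function.Injective f) : Pushout f g → Option B :=
  Quot.lift (pAux f g) (by
    rintro _ _ ⟨z, rfl, rfl⟩
    show pAux f g (Sum.inl (f z)) = pAux f g (Sum.inr (g z))
    have h : ∃ w, f w = f z := ⟨z, rfl⟩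
    simp only [pAux, dif_pos h]
    exact congrArg some (congrArg g (hf h.choose_spec)))

lemma pAuxQ_inl {k A B : Type} {f : k → A} (g : k → B) (hf : Function.Injective f) (a : A) :
    pAuxQ g hf (pInl f g a) = if h : ∃ z, f z = a then some (g h.choose) else none := rfl

lemma pAuxQ_inr {k A B : Type} {f : k → A} (g : k → B) (hf : Function.Injective f) (b : B) :
    pAuxQ g hf (pInr f g b) = some b := rfl

lemma pInr_injective {k A B : Type} {f : k → A} (g : k → B) (hf : Function.Injective f) :
    Function.Injective (pInr f g) := fun b b' h => by
  have h2 := congrArg (pAuxQ g hf) h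
  rwa [pAuxQ_inr, pAuxQ_inr, Option.some_inj] at h2

lemma pInl_eq_pInr {k A B : Type} {f : k → A} (g : k → B) (hf : Function.Injective f)
    (a : A) (b : B) : pInl f g a = pInr f g b ↔ ∃ z, f z = a ∧ g z = b := by
  constructor
  · intro h
    have h2 := congrArg (pAuxQ g hf) h
    rw [pAuxQ_inl, pAuxQ_inr] at h2
    by_cases hex : ∃ z, f z = a
    · rw [dif_pos hex] at h2
      exact ⟨hex.choose, hex.choose_spec, Option.some_inj.1 h2⟩
    · rw [dif_neg hex] at h2
      exact absurd h2 (by simp)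
  · rintro ⟨z, rfl, rfl⟩
    exact Quot.sound ⟨z, rfl, rfl⟩

/-- Lemma 5.4.5: if a composite `φ = χ ∘ ψ` of cofibrations has both
`φ` and `ψ` in the image of `Φ` (genus zero and the oriented local conditions), then
`χ` is also in the image of `Φ`. -/
theorem stmt_17 {m k n : Type} [Fintype k]
    (sm : m → Bool) (sk : k → Bool) (sn : n → Bool)
    (ψ : Cob m k) (χ : Cob k n)
    (hψc : ψ.IsCofib) (hχc : χ.IsCofib)
    (hψg : ∀ a, ψ.g a = 0) (hψo : IsOriented sm sk ψ.lm ψ.ln)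
    (hφg : ∀ x, (Cob.comp χ ψ).g x = 0)
    (hφo : IsOriented sm sn (Cob.comp χ ψ).lm (Cob.comp χ ψ).ln) :
    (∀ b, χ.g b = 0) ∧ IsOriented sk sn χ.lm χ.ln := by
  obtain ⟨hψinj, uψ, huψ⟩ := hψc
  obtain ⟨hχinj, uχ, huχ⟩ := hχc
  -- A "section" v : k → m with ψ.lm x = ψ.ln z ↔ x = v z, preserved signs.
  have hv : ∀ z : k, ∃ a : m, sm a = sk z ∧ ∀ x, ψ.lm x = ψ.ln z ↔ x = a := by
    intro z
    rcases hψo (ψ.ln z) with ⟨a, b, _, _, _, _, hno⟩ | ⟨a, b, _, _, hab, hfib, _⟩ |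
      ⟨a, b, hs, hlm, hln⟩ | ⟨_, hno⟩
    · exact absurd rfl (hno z)
    · exact absurd (hψinj
        (((hfib a).2 (Or.inl rfl)).trans ((hfib b).2 (Or.inr rfl)).symm)) hab
    · refine ⟨a, ?_, hlm⟩
      have hz : z = b := (hln z).1 rfl
      rw [hz, hs]
    · exact absurd rfl (hno z)
  choose v hv1 hv2 using hv
  have hvlm : ∀ z, ψ.lm (v z) = ψ.ln z := fun z => (hv2 z (v z)).2 rfl
  have hvinj : Function.Injective v := fun z z' h =>
    hψinj (by rw [← hvlm z, ← hvlm z', h])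
  have hrinj : Function.Injective (pInr ψ.ln χ.lm) := pInr_injective _ hψinj
  -- key fiber description for the composite's lm
  have hkey : ∀ (x : m) (c : χ.C),
      pInl ψ.ln χ.lm (ψ.lm x) = pInr ψ.ln χ.lm c ↔ ∃ z, x = v z ∧ χ.lm z = c := by
    intro x c
    rw [pInl_eq_pInr _ hψinj]
    constructor
    · rintro ⟨z, hz1, hz2⟩
      exact ⟨z, (hv2 z x).1 hz1.symm, hz2⟩
    · rintro ⟨z, rfl, hz2⟩
      exact ⟨z, (hvlm z).symm, hz2⟩
  have hkln : ∀ (y : k) (c : χ.C),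
      pInl ψ.ln χ.lm (ψ.ln y) = pInr ψ.ln χ.lm c ↔ χ.lm y = c := by
    intro y c
    rw [pInl_eq_pInr _ hψinj]
    constructor
    · rintro ⟨z, hz1, hz2⟩
      rwa [← hψinj hz1]
    · intro h
      exact ⟨y, rfl, h⟩
  -- genus part
  have hgenus : ∀ c : χ.C, χ.g c = 0 := by
    intro c
    have h := hφg (pInr ψ.ln χ.lm c)
    have hcomp : (Cob.comp χ ψ).g (pInr ψ.ln χ.lm c) =
        (compGenus ψ.ln χ.lm (fun a => (ψ.g a : ℤ)) (fun b => (χ.g b : ℤ))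
          (pInr ψ.ln χ.lm c)).toNat := rfl
    rw [hcomp] at h
    have hA : (Finset.univ.filter
          (fun a : ψ.C => pInl ψ.ln χ.lm a = pInr ψ.ln χ.lm c)).card
        = (Finset.univ.filter (fun y : k => χ.lm y = c)).card := by
      refine (Finset.card_nbij (i := ψ.ln) ?_ ?_ ?_).symm
      · intro y hy
        simp only [Finset.coe_filter, Set.mem_setOf_eq, Finset.mem_coe, Finset.mem_filter, Finset.mem_univ, true_and] at hy ⊢
        exact (hkln y c).2 hy
      · intro y hy y' hy' hyy'
        exact hψinj hyy'
      · intro a ha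
        simp only [Finset.coe_filter, Set.mem_setOf_eq, Finset.mem_univ, true_and] at ha
        obtain ⟨z, hz1, hz2⟩ := (pInl_eq_pInr _ hψinj _ _).1 ha
        refine ⟨z, ?_, hz1⟩
        simp only [Finset.coe_filter, Set.mem_setOf_eq, Finset.mem_univ, true_and]
        exact hz2
    have hB : Finset.univ.filter
          (fun b : χ.C => pInr ψ.ln χ.lm b = pInr ψ.ln χ.lm c) = {c} := by
      ext b
      simp [hrinj.eq_iff]
    have hC : Finset.univ.filter
          (fun y : k => pInl ψ.ln χ.lm (ψ.ln y) = pInr ψ.ln χ.lm c)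
        = Finset.univ.filter (fun y : k => χ.lm y = c) := by
      ext y
      simp [hkln y c]
    have hSA : (∑ a ∈ Finset.univ.filter
          (fun a : ψ.C => pInl ψ.ln χ.lm a = pInr ψ.ln χ.lm c), ((ψ.g a : ℤ) - 1))
        = -((Finset.univ.filter (fun y : k => χ.lm y = c)).card : ℤ) := by
      have hterm : ∀ a ∈ Finset.univ.filter
          (fun a : ψ.C => pInl ψ.ln χ.lm a = pInr ψ.ln χ.lm c),
          ((ψ.g a : ℤ) - 1) = -1 := by
        intro a _
        rw [hψg a]
        norm_num
      rw [Finset.sum_congr rfl hterm, Finset.sum_const, hA]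
      simp
    have hval : compGenus ψ.ln χ.lm (fun a => (ψ.g a : ℤ)) (fun b => (χ.g b : ℤ))
        (pInr ψ.ln χ.lm c) = (χ.g c : ℤ) := by
      unfold compGenus
      rw [hSA, hB, hC]
      rw [Finset.sum_singleton]
      ring
    rw [hval, Int.toNat_natCast] at h
    exact h
  refine ⟨hgenus, ?_⟩
  -- orientation part
  intro c
  rcases hφo (pInr ψ.ln χ.lm c) with ⟨a, b, ha, hb, hab, hfib, hno⟩ |
    ⟨a, b, ha, hb, hab, hfib, hno⟩ | ⟨a, b, hs, hlm, hln⟩ | ⟨hno1, hno2⟩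
  · -- case 1: two m-points, pull back along v
    obtain ⟨z₁, hz₁, hc₁⟩ := (hkey a c).1 ((hfib a).2 (Or.inl rfl))
    obtain ⟨z₂, hz₂, hc₂⟩ := (hkey b c).1 ((hfib b).2 (Or.inr rfl))
    refine Or.inl ⟨z₁, z₂, ?_, ?_, ?_, ?_, ?_⟩
    · rw [← hv1 z₁, ← hz₁, ha]
    · rw [← hv1 z₂, ← hz₂, hb]
    · rintro rfl; exact hab (hz₁.trans hz₂.symm)
    · intro z
      constructor
      · intro hz
        have := (hfib (v z)).1 ((hkey (v z) c).2 ⟨z, rfl, hz⟩)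
        rcases this with h | h
        · exact Or.inl (hvinj (by rw [← hz₁, h]))
        · exact Or.inr (hvinj (by rw [← hz₂, h]))
      · rintro (rfl | rfl)
        · exact hc₁
        · exact hc₂
    · intro y hy
      exact hno y (by show pInr ψ.ln χ.lm (χ.ln y) = _; rw [hy])
  · -- case 2: two n-points
    refine Or.inr (Or.inl ⟨a, b, ha, hb, hab, ?_, ?_⟩)
    · intro y
      have := hfib y
      constructor
      · intro hy
        exact this.1 (by show pInr ψ.ln χ.lm (χ.ln y) = _; rw [hy])
      · intro hy
        exact hrinj (this.2 hy)
    · intro z hz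
      exact hno (v z) ((hkey (v z) c).2 ⟨z, rfl, hz⟩)
  · -- case 3
    obtain ⟨z₁, hz₁, hc₁⟩ := (hkey a c).1 ((hlm a).2 rfl)
    refine Or.inr (Or.inr (Or.inl ⟨z₁, b, ?_, ?_, ?_⟩))
    · rw [← hv1 z₁, ← hz₁, hs]
    · intro z
      constructor
      · intro hz
        have := (hlm (v z)).1 ((hkey (v z) c).2 ⟨z, rfl, hz⟩)
        exact hvinj (by rw [← hz₁, this])
      · rintro rfl; exact hc₁
    · intro y
      have := hln y
      constructor
      · intro hy
        exact this.1 (by show pInr ψ.ln χ.lm (χ.ln y) = _; rw [hy])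
      · intro hy
        exact hrinj (this.2 hy)
  · -- case 4
    refine Or.inr (Or.inr (Or.inr ⟨?_, ?_⟩))
    · intro z hz
      exact hno1 (v z) ((hkey (v z) c).2 ⟨z, rfl, hz⟩)
    · intro y hy
      exact hno2 y (by show pInr ψ.ln χ.lm (χ.ln y) = _; rw [hy])
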